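/- In a finite directed acyclic graph G, if there exists a directed path from node i to node j, then there exists a directed path P from i to j such that P is the unique directed path from i to j in the subgraph of G induced by the vertex set of P (an 'exclusive directed path'). -/

import Mathlib

/-- `P` is a directed path from `i` to `j` in the graph with edge relation `E`:
a sequence of distinct vertices starting at `i`, ending at `j`, with consecutive
vertices joined by edges. -/
def IsDiPath {V : Type*} (E : V → V → Prop) (i j : V) (P : List V) : Prop :=
  P.Chain' E ∧ P.head? = some i ∧ P.getLast? = some j ∧ P.Nodup

private lemma chain'_transGen {V : Type*} {E : V → V → Prop} {l : List V}
    (h : l.Chain' E) : l.Chain' (Relation.TransGen E) :=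
  h.imp fun _ _ => Relation.TransGen.single

private lemma nodup_of_chain' {V : Type*} {E : V → V → Prop}
    (hacyc : ∀ v, ¬ Relation.TransGen E v v) {l : List V}
    (h : l.Chain' E) : l.Nodup := by
  haveI : IsTrans V (Relation.TransGen E) := ⟨fun _ _ _ => Relation.TransGen.trans⟩
  by_contra hn
  obtain ⟨x, hx⟩ := List.exists_duplicate_iff_not_nodup.2 hn
  have hs : List.Sublist [x, x] l := List.duplicate_iff_sublist.1 hx
  have := (chain'_transGen h).sublist hs
  rw [List.isChain_cons_cons] at this
  exact hacyc x this.1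

private lemma exists_walk {V : Type*} {E : V → V → Prop} {i j : V}
    (h : Relation.TransGen E i j) :
    ∃ P : List V, P.Chain' E ∧ P.head? = some i ∧ P.getLast? = some j := by
  induction h with
  | @single c e =>
    exact ⟨[i, c], List.isChain_pair.2 e, rfl, rfl⟩
  | @tail b c _ e ih =>
    obtain ⟨P, hc, hh, hl⟩ := ih
    have hPne : P ≠ [] := by rintro rfl; simp at hh
    refine ⟨P ++ [c], ?_, ?_, ?_⟩
    · change List.IsChain E (P ++ [c])
      rw [List.isChain_append]
      refine ⟨hc, List.isChain_singleton _, ?_⟩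
      intro x hx y hy
      simp only [List.head?_cons, Option.mem_def, Option.some.injEq] at hy
      rw [hl] at hx
      simp only [Option.mem_def, Option.some.injEq] at hx
      subst hx; subst hy; exact e
    · rwa [List.head?_append_of_ne_nil _ hPne]
    · simp [List.getLast?_concat]

private lemma aux_subset {V : Type*} {P : List V} {r : V → V → Prop}
    (hmem : ∀ a b, r a b → a ∈ P ∧ b ∈ P) :
    ∀ l : List V, l.Chain' r → 2 ≤ l.length → ∀ x ∈ l, x ∈ P := by
  intro l
  induction l with
  | nil => simp
  | cons a t ih =>
    intro hc hlen x hx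
    cases t with
    | nil => simp at hlen
    | cons b t' =>
      change List.IsChain r (a :: b :: t') at hc
      rw [List.isChain_cons_cons] at hc
      rcases List.mem_cons.1 hx with rfl | hx
      · exact (hmem _ _ hc.1).1
      · cases t' with
        | nil =>
          rw [List.mem_singleton] at hx
          subst hx; exact (hmem _ _ hc.1).2
        | cons c t'' =>
          exact ih hc.2 (by simp) x hx

/-- In a finite DAG, if there is a directed path from `i` to `j`, then there is
an *exclusive* directed path `P` from `i` to `j`: a path that is the unique directed path
from `i` to `j` in the subgraph induced by the vertices of `P`. -/
theorem exists_exclusive_directed_path {V : Type*} [Fintype V]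
    (E : V → V → Prop) (hacyc : ∀ v, ¬ Relation.TransGen E v v)
    (i j : V) (h : Relation.TransGen E i j) :
    ∃ P : List V, IsDiPath E i j P ∧
      ∀ Q : List V, IsDiPath (fun a b => E a b ∧ a ∈ P ∧ b ∈ P) i j Q → Q = P := by
  haveI : IsTrans V (Relation.TransGen E) := ⟨fun _ _ _ => Relation.TransGen.trans⟩
  haveI : IsAntisymm V (Relation.TransGen E) :=
    ⟨fun a _ h1 h2 => absurd (h1.trans h2) (hacyc a)⟩
  -- choose a walk of minimal length
  set p : ℕ → Prop := fun n =>
    ∃ P : List V, (P.Chain' E ∧ P.head? = some i ∧ P.getLast? = some j) ∧ P.length = n with hp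
  have hpex : ∃ n, p n := by
    obtain ⟨P, hP⟩ := exists_walk h
    exact ⟨P.length, P, hP, rfl⟩
  classical
  obtain ⟨P, ⟨hc, hh, hl⟩, hlen⟩ := Nat.find_spec hpex
  have hmin : ∀ Q : List V, Q.Chain' E → Q.head? = some i → Q.getLast? = some j →
      P.length ≤ Q.length := by
    intro Q h1 h2 h3
    rw [hlen]
    exact Nat.find_le ⟨Q, ⟨h1, h2, h3⟩, rfl⟩
  have hnd : P.Nodup := nodup_of_chain' hacyc hc
  refine ⟨P, ⟨hc, hh, hl, hnd⟩, ?_⟩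
  rintro Q ⟨hqc, hqh, hql, hqnd⟩
  -- Q is a chain in E
  have hqcE : Q.Chain' E := hqc.imp fun _ _ hab => hab.1
  -- Q length is at least 2
  have hij : i ≠ j := by rintro rfl; exact hacyc i h
  have hQne : Q ≠ [] := by rintro rfl; simp at hqh
  have hQlen2 : 2 ≤ Q.length := by
    rcases Q with _ | ⟨a, _ | ⟨b, t⟩⟩
    · simp at hqh
    · simp only [List.head?_cons, Option.some.injEq] at hqh
      rw [List.getLast?_singleton] at hql
      simp only [Option.some.injEq] at hql
      exact absurd (hqh.symm.trans hql) hij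
    · simp
  -- Q ⊆ P
  have hsub : Q ⊆ P := fun x hx =>
    aux_subset (fun _ _ hab => hab.2) Q hqc hQlen2 x hx
  -- hence Q <+~ P, and P.length ≤ Q.length by minimality, so Q ~ P
  have hsp : List.Subperm Q P := hqnd.subperm hsub
  have hperm : List.Perm Q P := hsp.perm_of_length_le (hmin Q hqcE hqh hql)
  -- both sorted w.r.t. TransGen E
  have hPs : P.Pairwise (Relation.TransGen E) :=
    List.isChain_iff_pairwise.1 (chain'_transGen hc)
  have hQs : Q.Pairwise (Relation.TransGen E) :=
    List.isChain_iff_pairwise.1 (chain'_transGen hqcE)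
  exact List.Perm.eq_of_pairwise' hQs hPs hperm
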